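/- Anytime-valid coverage of the prior-posterior-ratio confidence sets: defining C_t = {θ : ℓ_t(θ) ≤ 1/δ} for δ ∈ (0,1], the true parameter θ* is contained in C_t simultaneously for all t ≥ 1 with probability at least 1 − δ, where probability is over the prior draw of θ* and the observations. -/

import Mathlib

open MeasureTheory

lemma ville_step {Ω : Type*} {m : MeasurableSpace Ω}
    {μ : Measure Ω} [IsProbabilityMeasure μ] {ℱ : Filtration ℕ m}
    (ℓ : ℕ → Ω → ℝ) (hsm : Supermartingale ℓ ℱ μ)
    (hnonneg : ∀ t ω, 0 ≤ ℓ t ω)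
    (h0 : ∀ ω, ℓ 0 ω = 1)
    {δ : ℝ} (hδ : 0 < δ) (hδ1 : δ ≤ 1) (n : ℕ) :
    μ {ω | ∃ j, 1 ≤ j ∧ j ≤ n ∧ 1 / δ ≤ ℓ j ω} ≤ ENNReal.ofReal δ := by
  set c : ℝ := 1 / δ with hc
  have hcpos : 0 < c := by positivity
  set τ : Ω → WithTop ℕ := fun ω => ((hittingBtwn ℓ (Set.Ici c) 1 n ω : ℕ) : WithTop ℕ) with hτdef
  have hτ : IsStoppingTime ℱ τ :=
    Adapted.isStoppingTime_hittingBtwn hsm.stronglyAdapted.adapted measurableSet_Ici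
  have hτle : ∀ ω, τ ω ≤ n := fun ω => WithTop.coe_le_coe.mpr (hittingBtwn_le ω)
  -- expectation of stopped value is at most 1
  have hint : ∫ ω, stoppedValue ℓ τ ω ∂μ ≤ 1 := by
    have := hsm.neg.expected_stoppedValue_mono (isStoppingTime_const ℱ 0) hτ
      (fun ω => WithTop.coe_le_coe.mpr (Nat.zero_le _)) hτle
    have h1 : stoppedValue (-ℓ) (fun _ => WithTop.some (0 : ℕ)) = fun ω => -(ℓ 0 ω) := rfl
    have h2 : stoppedValue (-ℓ) τ = fun ω => -(stoppedValue ℓ τ ω) := rfl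
    rw [h1, h2, integral_neg, integral_neg, neg_le_neg_iff] at this
    calc ∫ ω, stoppedValue ℓ τ ω ∂μ ≤ ∫ ω, ℓ 0 ω ∂μ := this
      _ = ∫ (_ : Ω), (1 : ℝ) ∂μ := by simp [h0]
      _ = 1 := by simp
  set B : Set Ω := {ω | ∃ j, 1 ≤ j ∧ j ≤ n ∧ c ≤ ℓ j ω} with hB
  have hBmeas : MeasurableSet B := by
    have : B = ⋃ j ∈ Set.Icc 1 n, {ω | c ≤ ℓ j ω} := by
      ext ω; simp [hB, Set.mem_Icc, and_assoc]
    rw [this]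
    exact MeasurableSet.biUnion (Set.to_countable _) fun j _ =>
      measurableSet_le measurable_const
        ((hsm.stronglyMeasurable j).measurable.mono (ℱ.le j) le_rfl)
  have hstopint : Integrable (stoppedValue ℓ τ) μ :=
    (hsm.neg.integrable_stoppedValue hτ hτle).neg.congr (by
      filter_upwards with ω
      simp [stoppedValue])
  have hge : ∀ ω ∈ B, c ≤ stoppedValue ℓ τ ω := by
    intro ω hω
    obtain ⟨j, hj1, hjn, hjc⟩ := hω
    have : stoppedValue ℓ τ ω ∈ Set.Ici c :=
      stoppedValue_hittingBtwn_mem ⟨j, ⟨hj1, hjn⟩, hjc⟩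
    exact this
  have hmarkov : c * (μ B).toReal ≤ ∫ ω in B, stoppedValue ℓ τ ω ∂μ :=
    by have := setIntegral_ge_of_const_le hBmeas (measure_ne_top μ B) hge hstopint.integrableOn
       rwa [smul_eq_mul, mul_comm, Measure.real] at this
  have hsetle : ∫ ω in B, stoppedValue ℓ τ ω ∂μ ≤ ∫ ω, stoppedValue ℓ τ ω ∂μ := by
    apply setIntegral_le_integral hstopint
    filter_upwards with ω
    simp only [Pi.zero_apply, stoppedValue]
    exact hnonneg _ _
  have hkey : c * (μ B).toReal ≤ 1 := le_trans hmarkov (le_trans hsetle hint)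
  have hfin : (μ B).toReal ≤ δ := by
    rw [hc] at hkey
    have h := mul_le_mul_of_nonneg_left hkey hδ.le
    rw [← mul_assoc, mul_one_div, div_self hδ.ne', one_mul, mul_one] at h
    exact h
  calc μ B = ENNReal.ofReal (μ B).toReal := (ENNReal.ofReal_toReal (measure_ne_top μ B)).symm
    _ ≤ ENNReal.ofReal δ := ENNReal.ofReal_le_ofReal hfin

/-- Anytime-valid coverage: let `ℓ t ω` be the prior-posterior ratio at the true
parameter after `t` observations, a nonnegative supermartingale with ℓ_0 = 1.
Then θ* belongs to the confidence set C_t = {θ : ℓ_t(θ) ≤ 1/δ} simultaneously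
for all t ≥ 1 with probability at least 1 − δ. -/
theorem anytime_valid_coverage {Ω : Type*} {m : MeasurableSpace Ω}
    {μ : Measure Ω} [IsProbabilityMeasure μ] {ℱ : Filtration ℕ m}
    (ℓ : ℕ → Ω → ℝ) (hsm : Supermartingale ℓ ℱ μ)
    (hnonneg : ∀ t ω, 0 ≤ ℓ t ω)
    (h0 : ∀ ω, ℓ 0 ω = 1)
    {δ : ℝ} (hδ : 0 < δ) (hδ1 : δ ≤ 1) :
    1 - δ ≤ (μ {ω | ∀ t, 1 ≤ t → ℓ t ω ≤ 1 / δ}).toReal := by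
  set C : Set Ω := {ω | ∀ t, 1 ≤ t → ℓ t ω ≤ 1 / δ} with hC
  have hmeas_t : ∀ t : ℕ, MeasurableSet {ω | ℓ t ω ≤ 1 / δ} := fun t =>
    measurableSet_le ((hsm.stronglyMeasurable t).measurable.mono (ℱ.le t) le_rfl)
      measurable_const
  have hCmeas : MeasurableSet C := by
    have : C = ⋂ t ∈ {t : ℕ | 1 ≤ t}, {ω | ℓ t ω ≤ 1 / δ} := by
      ext ω; simp [hC]
    rw [this]
    exact MeasurableSet.biInter (Set.to_countable _) fun t _ => hmeas_t t
  -- bound the complement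
  have hcompl : μ Cᶜ ≤ ENNReal.ofReal δ := by
    have hsub : Cᶜ ⊆ ⋃ n, {ω | ∃ j, 1 ≤ j ∧ j ≤ n ∧ 1 / δ ≤ ℓ j ω} := by
      intro ω hω
      simp only [hC, Set.mem_compl_iff, Set.mem_setOf_eq, not_forall] at hω
      obtain ⟨t, ht, hlt⟩ := hω
      exact Set.mem_iUnion.mpr ⟨t, t, ht, le_rfl, (not_le.mp hlt).le⟩
    have hmono : Monotone fun n => {ω | ∃ j, 1 ≤ j ∧ j ≤ n ∧ 1 / δ ≤ ℓ j ω} := by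
      intro a b hab ω hω
      obtain ⟨j, h1, h2, h3⟩ := hω
      exact ⟨j, h1, h2.trans hab, h3⟩
    calc μ Cᶜ ≤ μ (⋃ n, {ω | ∃ j, 1 ≤ j ∧ j ≤ n ∧ 1 / δ ≤ ℓ j ω}) := measure_mono hsub
      _ = ⨆ n, μ {ω | ∃ j, 1 ≤ j ∧ j ≤ n ∧ 1 / δ ≤ ℓ j ω} :=
          Directed.measure_iUnion (Monotone.directed_le hmono)
      _ ≤ ENNReal.ofReal δ :=
          iSup_le fun n => ville_step ℓ hsm hnonneg h0 hδ hδ1 n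
  have hcompl' : (μ Cᶜ).toReal ≤ δ := by
    calc (μ Cᶜ).toReal ≤ (ENNReal.ofReal δ).toReal :=
          ENNReal.toReal_mono ENNReal.ofReal_ne_top hcompl
      _ = δ := ENNReal.toReal_ofReal hδ.le
  have hμC : (μ C).toReal = 1 - (μ Cᶜ).toReal := by
    have := prob_compl_eq_one_sub (μ := μ) hCmeas
    have h1 : (μ Cᶜ).toReal = 1 - (μ C).toReal := by
      rw [this, ENNReal.toReal_sub_of_le prob_le_one ENNReal.one_ne_top]
      simp
    linarith
  rw [hμC]
  linarith
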